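/- Suppose the graph is complete (every node's neighborhood is all other N−1 nodes) and there is exactly one Byzantine node whose honest state would lie strictly between the minimum and maximum of the honest nodes' states. Then with p = 1 the robust aggregate Γ₁ applied at any honest node is unchanged if the Byzantine's broadcast value exceeds the maximum (or falls below the minimum) of the honest neighbors' states; i.e., extreme outlier attacks have no effect on the robust update. -/

import Mathlib

/-- Trimmed-sum operator `Γ_p`: sort, replace the `p` smallest and `p` largest entries by
the mean of the remaining `n - 2p` entries, and return the sum of the resulting list. -/
noncomputable def trimmedSum (p : ℕ) (l : List ℝ) : ℝ :=
  let s := l.mergeSort (· ≤ ·)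
  let mid := (s.drop p).take (l.length - 2 * p)
  mid.sum + 2 * p * (mid.sum / (l.length - 2 * p))

lemma mergeSort_max (y : List ℝ) (hy : y.Pairwise (· ≤ ·)) (v : ℝ)
    (hv : ∀ u ∈ y, u ≤ v) : (y ++ [v]).mergeSort (· ≤ ·) = y ++ [v] := by
  apply List.mergeSort_eq_self
  rw [List.pairwise_append]
  exact ⟨hy, List.pairwise_singleton _ _, by simpa using hv⟩

lemma mergeSort_min (y : List ℝ) (hy : y.Pairwise (· ≤ ·)) (v : ℝ)
    (hv : ∀ u ∈ y, v ≤ u) : (y ++ [v]).mergeSort (· ≤ ·) = v :: y := by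
  refine List.Perm.eq_of_pairwise' (r := (· ≤ ·))
    (List.pairwise_mergeSort' _ _) (List.pairwise_cons.mpr ⟨hv, hy⟩)
    (((y ++ [v]).mergeSort_perm _).trans (List.perm_append_singleton _ _))

lemma trimmedSum_max (y : List ℝ) (hy : y.Pairwise (· ≤ ·)) (hlen : 2 ≤ y.length)
    (v : ℝ) (hv : ∀ u ∈ y, u ≤ v) :
    trimmedSum 1 (y ++ [v]) = (y.drop 1).sum + 2 * ((y.drop 1).sum / (y.length - 1)) := by
  have h1 : (1 : ℕ) ≤ y.length := le_trans (by norm_num) hlen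
  simp only [trimmedSum, mergeSort_max y hy v hv, List.length_append, List.length_singleton]
  have hlen' : y.length + 1 - 2 * 1 = y.length - 1 := by omega
  rw [hlen', List.drop_append_of_le_length h1, List.take_append_of_le_length (by simp)]
  have : (y.drop 1).take (y.length - 1) = y.drop 1 := by
    apply List.take_of_length_le; simp
  rw [this]
  push_cast
  ring

lemma trimmedSum_min (y : List ℝ) (hy : y.Pairwise (· ≤ ·)) (hlen : 2 ≤ y.length)
    (v : ℝ) (hv : ∀ u ∈ y, v ≤ u) :
    trimmedSum 1 (y ++ [v]) =
      (y.take (y.length - 1)).sum + 2 * ((y.take (y.length - 1)).sum / (y.length - 1)) := by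
  have h1 : (1 : ℕ) ≤ y.length := le_trans (by norm_num) hlen
  simp only [trimmedSum, mergeSort_min y hy v hv, List.length_append, List.length_singleton]
  have hlen' : y.length + 1 - 2 * 1 = y.length - 1 := by omega
  rw [hlen', List.drop_one, List.tail_cons]
  push_cast
  ring


/-- complete graph, one Byzantine among the `N-1` neighbors of an honest
node (so `m = N-2 ≥ 2` honest neighbor values `y`, sorted). With `p = 1`, the robust
aggregate `Γ₁` of the received values is unchanged whenever the Byzantine's broadcast
exceeds the maximum of the honest values (and likewise when it falls below their
minimum): extreme outlier attacks have no effect. -/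
theorem trimmedSum_ignores_extreme_outlier (N : ℕ) (hN : 4 ≤ N) (y : List ℝ)
    (hy : y.Pairwise (· ≤ ·)) (hm : y.length = N - 2) :
    ∀ v v' : ℝ,
      ((∀ u ∈ y, u < v) → (∀ u ∈ y, u < v') →
        trimmedSum 1 (y ++ [v]) = trimmedSum 1 (y ++ [v'])) ∧
      ((∀ u ∈ y, v < u) → (∀ u ∈ y, v' < u) →
        trimmedSum 1 (y ++ [v]) = trimmedSum 1 (y ++ [v'])) := by
  intro v v'
  have hlen : 2 ≤ y.length := by omega
  constructor
  · intro h h'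
    rw [trimmedSum_max y hy hlen v (fun u hu => (h u hu).le),
      trimmedSum_max y hy hlen v' (fun u hu => (h' u hu).le)]
  · intro h h'
    rw [trimmedSum_min y hy hlen v (fun u hu => (h u hu).le),
      trimmedSum_min y hy hlen v' (fun u hu => (h' u hu).le)]
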